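/- arXiv:cs/0306107 — 2 statements merged into one kernel-verified Lean document; each statement's English description precedes it below -/
import Mathlib

section
/- If in going from bundle B1 to bundle B2 (with B1 ⊑_f B2 and each agent extending at most one strand by at most one node), then any causal path (along → or ⇒ edges) in B2 contains at most two 'new' nodes (nodes not of the form ⟨f(s),i⟩ for some ⟨s,i⟩ ∈ B1), and all new nodes on the path occur after all old nodes. -/
namespace StrandPaper

/-- A strand space over a message set `M`: a type of strands, each with a trace,
a finite sequence of signed terms.  A signed term `(true, u)` is `+u` (send) and
`(false, u)` is `-u` (receive). -/
structure StrandSpace (M : Type) where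
  Strand : Type
  tr : Strand → List (Bool × M)

namespace StrandSpace

variable {M α : Type}

/-- Nodes are pairs of a strand and a (1-based) index. -/
abbrev Node (S : StrandSpace M) : Type := S.Strand × ℕ

/-- The signed term at a node (if the index is valid). -/
def term (S : StrandSpace M) (n : S.Node) : Option (Bool × M) := (S.tr n.1)[n.2 - 1]?

def IsNode (S : StrandSpace M) (n : S.Node) : Prop := 1 ≤ n.2 ∧ n.2 ≤ (S.tr n.1).length

/-- `n1 → n2`: `term n1 = +u` and `term n2 = -u`. -/
def SendsTo (S : StrandSpace M) (n1 n2 : S.Node) : Prop :=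
  ∃ u, S.term n1 = some (true, u) ∧ S.term n2 = some (false, u)

/-- `n1 ⇒ n2`: consecutive nodes of the same strand. -/
def SuccEdge (S : StrandSpace M) (n1 n2 : S.Node) : Prop :=
  n2.1 = n1.1 ∧ n2.2 = n1.2 + 1 ∧ S.IsNode n1 ∧ S.IsNode n2

/-- A (possibly infinite) bundle: a subgraph of `(N, → ∪ ⇒)` satisfying B2–B4:
every negative node has a unique incoming `→` edge, `⇒`-downward closure and
acyclicity. -/
structure Bundle (S : StrandSpace M) where
  nodes : Set S.Node
  comm : S.Node → S.Node → Prop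
  nodes_valid : ∀ n ∈ nodes, S.IsNode n
  comm_mem : ∀ n1 n2, comm n1 n2 → n1 ∈ nodes ∧ n2 ∈ nodes ∧ S.SendsTo n1 n2
  recv_unique : ∀ n2 ∈ nodes, ∀ u, S.term n2 = some (false, u) → ∃! n1, comm n1 n2
  succ_closed : ∀ n1 n2, S.SuccEdge n1 n2 → n2 ∈ nodes → n1 ∈ nodes
  acyclic : ∀ n, ¬ Relation.TransGen
      (fun m1 m2 => comm m1 m2 ∨ (S.SuccEdge m1 m2 ∧ m1 ∈ nodes ∧ m2 ∈ nodes)) n n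

variable {S : StrandSpace M}

/-- The causal edges (`→` or `⇒`) of a bundle. -/
def Bundle.edge (B : S.Bundle) (n1 n2 : S.Node) : Prop :=
  B.comm n1 n2 ∨ (S.SuccEdge n1 n2 ∧ n1 ∈ B.nodes ∧ n2 ∈ B.nodes)

/-- A causal path in a bundle. -/
def Bundle.CausalPath (B : S.Bundle) (l : List S.Node) : Prop :=
  l.Chain' B.edge ∧ ∀ n ∈ l, n ∈ B.nodes

/-- The height of the bundle is at most `k`: every causal path has at most `k+1` nodes
(i.e. length at most `k`). -/
def Bundle.HeightLE (B : S.Bundle) (k : ℕ) : Prop :=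
  ∀ l, B.CausalPath l → l.length ≤ k + 1

def Bundle.FiniteHeight (B : S.Bundle) : Prop := ∃ k, B.HeightLE k

noncomputable def Bundle.height (B : S.Bundle) : ℕ := sInf {k | B.HeightLE k}

/-- The height of a strand in a bundle: the largest `i` with `⟨s,i⟩ ∈ B` (0 if none). -/
noncomputable def Bundle.strandHeight (B : S.Bundle) (s : S.Strand) : ℕ :=
  sSup {i | (s, i) ∈ B.nodes}

/-- The empty bundle. -/
def emptyBundle (S : StrandSpace M) : S.Bundle where
  nodes := ∅
  comm := fun _ _ => False
  nodes_valid := fun n hn => absurd hn (Set.notMem_empty n)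
  comm_mem := fun _ _ h => h.elim
  recv_unique := fun n hn => absurd hn (Set.notMem_empty n)
  succ_closed := fun _ n2 _ h => absurd h (Set.notMem_empty n2)
  acyclic := by
    intro n h
    cases h with
    | single h1 => rcases h1 with h1 | ⟨_, h3, _⟩
                   · exact h1
                   · exact h3
    | tail _ h1 => rcases h1 with h1 | ⟨_, h3, _⟩
                   · exact h1
                   · exact h3

/-- `B1 ⊑_f B2`: `f` maps each strand prefix in `B1` into `B2`, preserving terms
and `→` edges. -/
def Embeds (f : S.Strand ≃ S.Strand) (B1 B2 : S.Bundle) : Prop :=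
  (∀ s i, (s, i) ∈ B1.nodes → (f s, i) ∈ B2.nodes ∧ S.term (s, i) = S.term (f s, i)) ∧
  (∀ s i s' j, B1.comm (s, i) (s', j) → B2.comm (f s, i) (f s', j))

/-- `B1 ↦ B2` via the agent-respecting bijection `f`: `B1 ⊑_f B2` and, for each
agent, at most one of its strands is extended, by at most (exactly) one node. -/
def StepVia (A : S.Strand → α) (f : S.Strand ≃ S.Strand) (B1 B2 : S.Bundle) : Prop :=
  (∀ s, A (f s) = A s) ∧ Embeds f B1 B2 ∧
  ∀ s s', A s = A s' →
    B2.strandHeight (f s) ≠ B1.strandHeight s →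
    B2.strandHeight (f s') ≠ B1.strandHeight s' →
    s = s' ∧ B2.strandHeight (f s) = B1.strandHeight s + 1

/-- `B1 ↦ B2`. -/
def Step (A : S.Strand → α) (B1 B2 : S.Bundle) : Prop := ∃ f, StepVia A f B1 B2

/-- A chain `B_0 ↦ B_1 ↦ ⋯` starting from the empty bundle. -/
structure Chain (A : S.Strand → α) where
  B : ℕ → S.Bundle
  init : B 0 = emptyBundle S
  step : ∀ k, Step A (B k) (B (k + 1))

/-- The event (if any) performed by agent `a` in the step `B1 ↦ B2`:
the term of the single new node on a strand of `a`. -/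
noncomputable def stepEvent (A : S.Strand → α) (B1 B2 : S.Bundle) (a : α) :
    Option (Bool × M) := by
  classical
  exact if h : ∃ p : (S.Strand ≃ S.Strand) × S.Strand,
      StepVia A p.1 B1 B2 ∧ A p.2 = a ∧
      B2.strandHeight (p.1 p.2) = B1.strandHeight p.2 + 1 then
    S.term (h.choose.1 h.choose.2, B2.strandHeight (h.choose.1 h.choose.2))
  else none

/-- The history of agent `a` at time `m` along a chain. -/
noncomputable def Chain.hist {A : S.Strand → α} (C : Chain (S := S) A) (a : α) :
    ℕ → List (Bool × M)
  | 0 => []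
  | m + 1 => C.hist a m ++ (stepEvent A (C.B m) (C.B (m + 1)) a).toList

end StrandSpace

/-- A run: a local state (history of events) for each agent at each time.
`(true, u)` is `sent(u)` and `(false, u)` is `recv(u)`. -/
def Run (α M : Type) := ℕ → α → List (Bool × M)

variable {M α : Type}

/-- MP1–MP3 with respect to generating history sets `V`. -/
def MP (V : α → Set (List (Bool × M))) (r : Run α M) : Prop :=
  (∀ a m, r m a ∈ V a) ∧
  (∀ a m u, (false, u) ∈ r m a → ∃ b, (true, u) ∈ r m b) ∧
  (∀ a, r 0 a = []) ∧
  (∀ a m, r (m + 1) a = r m a ∨ ∃ e, r (m + 1) a = r m a ++ [e])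

/-- The strand system generated by history sets `V`: all runs satisfying MP1–3. -/
def generated (V : α → Set (List (Bool × M))) : Set (Run α M) := {r | MP V r}

def IsStrandSystem (R : Set (Run α M)) : Prop :=
  ∃ V : α → Set (List (Bool × M)), R = generated V

/-- The run associated with a chain. -/
noncomputable def StrandSpace.Chain.run {S : StrandSpace M} {A : S.Strand → α}
    (C : StrandSpace.Chain (S := S) A) : Run α M := fun m a => C.hist a m

/-- `R(Σ, A, A)`: the translation of the strand space `S` under agent assignment `A`. -/
def systemOf (S : StrandSpace M) (A : S.Strand → α) : Set (Run α M) :=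
  {r | ∃ C : StrandSpace.Chain (S := S) A, C.run = r}

end StrandPaper

open StrandPaper StrandPaper.StrandSpace

section Aux

variable {M α : Type} {S : StrandSpace M} {A : S.Strand → α}
variable {f : S.Strand ≃ S.Strand} {B1 B2 : S.Bundle}

/-- A node is "old" if it is the `f`-image of a `B1`-node. -/
def IsOld (f : S.Strand ≃ S.Strand) (B1 : S.Bundle) (n : S.Node) : Prop :=
  ∃ s i, n = (f s, i) ∧ (s, i) ∈ B1.nodes

lemma bundle_bddAbove (B : S.Bundle) (s : S.Strand) :
    BddAbove {i | (s, i) ∈ B.nodes} :=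
  ⟨(S.tr s).length, fun i hi => (B.nodes_valid _ hi).2⟩

lemma le_strandHeight (B : S.Bundle) {s : S.Strand} {i : ℕ} (h : (s, i) ∈ B.nodes) :
    i ≤ B.strandHeight s := le_csSup (bundle_bddAbove B s) h

lemma mem_of_le_aux (B : S.Bundle) {s : S.Strand} :
    ∀ i, (s, i) ∈ B.nodes → ∀ j, 1 ≤ j → j ≤ i → (s, j) ∈ B.nodes := by
  intro i
  induction i with
  | zero => intro h j h1 h2; omega
  | succ i ih =>
    intro h j h1 h2
    rcases Nat.lt_or_ge j (i + 1) with hlt | hge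
    · have hi1 : 1 ≤ i := by omega
      have hlen : i + 1 ≤ (S.tr s).length := (B.nodes_valid _ h).2
      have hi : (s, i) ∈ B.nodes :=
        B.succ_closed (s, i) (s, i + 1)
          ⟨rfl, rfl, ⟨hi1, Nat.le_of_succ_le hlen⟩, B.nodes_valid _ h⟩ h
      exact ih hi j h1 (by omega)
    · have : j = i + 1 := by omega
      subst this; exact h

/-- A new node sits exactly at the top of its strand in `B2`, one above its
`B1`-height. -/
lemma new_is_top (h : StepVia A f B1 B2) {n : S.Node} (hn : n ∈ B2.nodes)
    (hnew : ¬ IsOld f B1 n) :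
    n.2 = B2.strandHeight n.1 ∧ n.2 = B1.strandHeight (f.symm n.1) + 1 := by
  obtain ⟨t, i⟩ := n
  simp only at *
  set s := f.symm t with hs
  have hfs : f s = t := f.apply_symm_apply t
  have h1i : 1 ≤ i := (B2.nodes_valid _ hn).1
  have hileh2 : i ≤ B2.strandHeight t := le_strandHeight B2 hn
  have hnotB1 : (s, i) ∉ B1.nodes := fun hmem => hnew ⟨s, i, by rw [hfs], hmem⟩
  have hgt : B1.strandHeight s < i := by
    by_contra hle
    push_neg at hle
    have hne : {j | (s, j) ∈ B1.nodes}.Nonempty := by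
      by_contra hemp
      rw [Set.not_nonempty_iff_eq_empty] at hemp
      have h0 : B1.strandHeight s = 0 := by
        unfold StrandSpace.Bundle.strandHeight
        rw [hemp]
        simp
      omega
    have hmem : (s, B1.strandHeight s) ∈ B1.nodes :=
      Nat.sSup_mem hne (bundle_bddAbove B1 s)
    exact hnotB1 (mem_of_le_aux B1 _ hmem i h1i hle)
  have hne2 : B2.strandHeight (f s) ≠ B1.strandHeight s := by rw [hfs]; omega
  obtain ⟨-, heq⟩ := h.2.2 s s rfl hne2 hne2
  rw [hfs] at heq
  constructor <;> omega

/-- Any causal edge out of a new node goes to a new receive node. -/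
lemma new_edge (h : StepVia A f B1 B2) {n m : S.Node} (he : B2.edge n m)
    (hnew : ¬ IsOld f B1 n) :
    ¬ IsOld f B1 m ∧ ∃ u, S.term m = some (false, u) := by
  rcases he with hc | ⟨hsucc, hn, hm⟩
  · obtain ⟨hn, hm, u, htn, htm⟩ := B2.comm_mem _ _ hc
    refine ⟨?_, u, htm⟩
    rintro ⟨s', j, rfl, hmemB1⟩
    have hterm := (h.2.1.1 s' j hmemB1).2
    have htB1 : S.term (s', j) = some (false, u) := by rw [hterm]; exact htm
    obtain ⟨p, hp, -⟩ := B1.recv_unique _ hmemB1 u htB1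
    obtain ⟨ps, pi⟩ := p
    have hc2 : B2.comm (f ps, pi) (f s', j) := h.2.1.2 ps pi s' j hp
    obtain ⟨q, -, hquniq⟩ := B2.recv_unique _ hm u htm
    have h1 := hquniq n hc
    have h2 := hquniq _ hc2
    exact hnew ⟨ps, pi, by rw [h1, h2], (B1.comm_mem _ _ hp).1⟩
  · exfalso
    obtain ⟨heq1, heq2, -, -⟩ := hsucc
    have htop := (new_is_top h hn hnew).1
    have hle : m.2 ≤ B2.strandHeight m.1 :=
      le_strandHeight B2 (by rwa [Prod.mk.eta] : (m.1, m.2) ∈ B2.nodes)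
    rw [heq1, heq2] at hle
    omega

/-- A new receive node has no outgoing causal edge. -/
lemma new_recv_no_edge (h : StepVia A f B1 B2) {n m : S.Node}
    (hnew : ¬ IsOld f B1 n) {u : M} (ht : S.term n = some (false, u)) :
    ¬ B2.edge n m := by
  rintro (hc | ⟨hsucc, hn, hm⟩)
  · obtain ⟨-, -, v, htn, -⟩ := B2.comm_mem _ _ hc
    rw [ht] at htn
    simp at htn
  · obtain ⟨heq1, heq2, -, -⟩ := hsucc
    have htop := (new_is_top h hn hnew).1
    have hle : m.2 ≤ B2.strandHeight m.1 :=
      le_strandHeight B2 (by rwa [Prod.mk.eta] : (m.1, m.2) ∈ B2.nodes)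
    rw [heq1, heq2] at hle
    omega

end Aux

/-- If `B1 ⊑_f B2` with each agent extending at most one strand by at most
one node, then any causal path in `B2` contains at most two "new" nodes (nodes not of
the form `⟨f(s),i⟩` for `⟨s,i⟩ ∈ B1`), and all new nodes occur after all old nodes. -/
theorem causal_path_new_nodes {M α : Type} {S : StrandSpace M} {A : S.Strand → α}
    (f : S.Strand ≃ S.Strand) (B1 B2 : S.Bundle) (h : StepVia A f B1 B2)
    (l : List S.Node) (hl : B2.CausalPath l) :
    ∃ l1 l2 : List S.Node, l = l1 ++ l2 ∧
      (∀ n ∈ l1, ∃ s i, n = (f s, i) ∧ (s, i) ∈ B1.nodes) ∧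
      (∀ n ∈ l2, ¬ ∃ s i, n = (f s, i) ∧ (s, i) ∈ B1.nodes) ∧
      l2.length ≤ 2 := by
  induction l with
  | nil => exact ⟨[], [], rfl, by simp, by simp, by simp⟩
  | cons n t ih =>
    obtain ⟨hchain, hmem⟩ := hl
    have hmem_t : ∀ x ∈ t, x ∈ B2.nodes := fun x hx => hmem x (List.mem_cons_of_mem _ hx)
    by_cases hold : IsOld f B1 n
    · obtain ⟨l1, l2, heq, h1, h2, h3⟩ := ih ⟨hchain.tail, hmem_t⟩
      refine ⟨n :: l1, l2, by rw [heq, List.cons_append], ?_, h2, h3⟩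
      rintro x hx
      rcases List.mem_cons.mp hx with rfl | hx
      · exact hold
      · exact h1 x hx
    · have hn : n ∈ B2.nodes := hmem n List.mem_cons_self
      rcases t with _ | ⟨m, t'⟩
      · refine ⟨[], [n], rfl, by simp, ?_, by simp⟩
        intro x hx
        rcases List.mem_singleton.mp hx with rfl
        exact hold
      · have hedge : B2.edge n m := (List.isChain_cons_cons.mp hchain).1
        obtain ⟨hmnew, u, hmterm⟩ := new_edge h hedge hold
        rcases t' with _ | ⟨c, t''⟩
        · refine ⟨[], [n, m], rfl, by simp, ?_, by simp⟩
          intro x hx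
          rcases List.mem_cons.mp hx with rfl | hx
          · exact hold
          · rcases List.mem_singleton.mp hx with rfl
            exact hmnew
        · exfalso
          have hedge2 : B2.edge m c := (List.isChain_cons_cons.mp (List.isChain_cons_cons.mp hchain).2).1
          exact new_recv_no_edge h hmnew hmterm hedge2
end

section
/- Every global state arising in the system R(Σ, Σ, id) (obtained by translating a strand space with each strand as a distinct agent) is message-equivalent to some bundle of Σ of finite height; and conversely every bundle of Σ of finite height is message-equivalent to some global state of R(Σ, Σ, id). -/
section Aux
namespace StrandPaper.StrandSpace

variable {M : Type} {S : StrandSpace M}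

lemma bddAbove_strandSet (B : S.Bundle) (s : S.Strand) :
    BddAbove {i | (s, i) ∈ B.nodes} :=
  ⟨(S.tr s).length, fun i hi => (B.nodes_valid _ hi).2⟩

lemma le_strandHeight {B : S.Bundle} {s : S.Strand} {i : ℕ} (h : (s, i) ∈ B.nodes) :
    i ≤ B.strandHeight s :=
  le_csSup (bddAbove_strandSet B s) h

lemma strandHeight_mem {B : S.Bundle} {s : S.Strand} (h : B.strandHeight s ≠ 0) :
    (s, B.strandHeight s) ∈ B.nodes := by
  have hne : {i | (s, i) ∈ B.nodes}.Nonempty := by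
    by_contra h'
    rw [Set.not_nonempty_iff_eq_empty] at h'
    unfold Bundle.strandHeight at h
    rw [h'] at h
    simp at h
  exact Nat.sSup_mem hne (bddAbove_strandSet B s)

lemma mem_of_mem_of_le {B : S.Bundle} {s : S.Strand} :
    ∀ j, (s, j) ∈ B.nodes → ∀ i, 1 ≤ i → i ≤ j → (s, i) ∈ B.nodes := by
  intro j
  induction j with
  | zero => intro _ i h1 h2; omega
  | succ j ih =>
    intro hj i h1 h2
    rcases Nat.lt_or_ge i (j+1) with hlt | hge
    · have hj' : (s, j) ∈ B.nodes := by
        have hvalid := B.nodes_valid _ hj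
        refine B.succ_closed (s, j) (s, j+1) ⟨rfl, rfl, ⟨by omega, ?_⟩, hvalid⟩ hj
        exact Nat.le_of_succ_le hvalid.2
      exact ih hj' i h1 (by omega)
    · have : i = j + 1 := by omega
      rwa [this]

lemma mem_of_le_strandHeight {B : S.Bundle} {s : S.Strand} {i : ℕ}
    (h1 : 1 ≤ i) (h2 : i ≤ B.strandHeight s) : (s, i) ∈ B.nodes :=
  mem_of_mem_of_le _ (strandHeight_mem (by omega)) i h1 h2

lemma strandHeight_mono {B1 B2 : S.Bundle} {s : S.Strand}
    (h : ∀ i, (s, i) ∈ B1.nodes → (s, i) ∈ B2.nodes) :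
    B1.strandHeight s ≤ B2.strandHeight s := by
  rcases Nat.eq_zero_or_pos (B1.strandHeight s) with h0 | hpos
  · omega
  · exact le_strandHeight (h _ (strandHeight_mem (by omega)))

lemma strandHeight_empty (s : S.Strand) : (emptyBundle S).strandHeight s = 0 := by
  unfold Bundle.strandHeight emptyBundle
  simp

end StrandPaper.StrandSpace
end Aux

section Aux2
namespace StrandPaper.StrandSpace

variable {M : Type} {S : StrandSpace M}

lemma stepVia_id_eq {f : S.Strand ≃ S.Strand} {B1 B2 : S.Bundle}
    (h : StepVia (id : S.Strand → S.Strand) f B1 B2) : ∀ s, f s = s := h.1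

lemma stepVia_nodes_mono {f : S.Strand ≃ S.Strand} {B1 B2 : S.Bundle}
    (h : StepVia (id : S.Strand → S.Strand) f B1 B2) {n : S.Node}
    (hn : n ∈ B1.nodes) : n ∈ B2.nodes := by
  have := (h.2.1.1 n.1 n.2 hn).1
  rwa [stepVia_id_eq h] at this

lemma stepVia_comm_mono {f : S.Strand ≃ S.Strand} {B1 B2 : S.Bundle}
    (h : StepVia (id : S.Strand → S.Strand) f B1 B2) {n1 n2 : S.Node}
    (hc : B1.comm n1 n2) : B2.comm n1 n2 := by
  have := h.2.1.2 n1.1 n1.2 n2.1 n2.2 hc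
  rwa [stepVia_id_eq h, stepVia_id_eq h] at this

lemma stepVia_height_mono {f : S.Strand ≃ S.Strand} {B1 B2 : S.Bundle}
    (h : StepVia (id : S.Strand → S.Strand) f B1 B2) (s : S.Strand) :
    B1.strandHeight s ≤ B2.strandHeight s :=
  strandHeight_mono (fun _ hi => stepVia_nodes_mono h hi)

lemma stepVia_height_cases {f : S.Strand ≃ S.Strand} {B1 B2 : S.Bundle}
    (h : StepVia (id : S.Strand → S.Strand) f B1 B2) (s : S.Strand) :
    B2.strandHeight s = B1.strandHeight s ∨
      B2.strandHeight s = B1.strandHeight s + 1 := by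
  by_cases he : B2.strandHeight s = B1.strandHeight s
  · exact Or.inl he
  · right
    have hf : f s = s := stepVia_id_eq h s
    have h' : B2.strandHeight (f s) ≠ B1.strandHeight s := by rwa [hf]
    have := (h.2.2 s s rfl h' h').2
    rwa [hf] at this

lemma chain_nodes_mono (C : Chain (S := S) (id : S.Strand → S.Strand))
    {k k' : ℕ} (hk : k ≤ k') {n : S.Node} (hn : n ∈ (C.B k).nodes) :
    n ∈ (C.B k').nodes := by
  induction k', hk using Nat.le_induction with
  | base => exact hn
  | succ k' _ ih =>
    obtain ⟨f, hf⟩ := C.step k'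
    exact stepVia_nodes_mono hf ih

lemma chain_comm_mono (C : Chain (S := S) (id : S.Strand → S.Strand))
    {k k' : ℕ} (hk : k ≤ k') {n1 n2 : S.Node} (hc : (C.B k).comm n1 n2) :
    (C.B k').comm n1 n2 := by
  induction k', hk using Nat.le_induction with
  | base => exact hc
  | succ k' _ ih =>
    obtain ⟨f, hf⟩ := C.step k'
    exact stepVia_comm_mono hf ih

end StrandPaper.StrandSpace
end Aux2

section Aux3
namespace StrandPaper.StrandSpace

variable {M : Type} {S : StrandSpace M}

lemma stepEvent_eq_none {f : S.Strand ≃ S.Strand} {B1 B2 : S.Bundle}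
    (hstep : StepVia (id : S.Strand → S.Strand) f B1 B2) {s : S.Strand}
    (hH : B2.strandHeight s = B1.strandHeight s) :
    stepEvent (id : S.Strand → S.Strand) B1 B2 s = none := by
  unfold stepEvent
  rw [dif_neg]
  rintro ⟨p, hp1, hp2, hp3⟩
  have hps : p.2 = s := hp2
  have hpf : p.1 p.2 = p.2 := stepVia_id_eq hp1 p.2
  rw [hpf, hps] at hp3
  omega

lemma stepEvent_eq_some {f : S.Strand ≃ S.Strand} {B1 B2 : S.Bundle}
    (hstep : StepVia (id : S.Strand → S.Strand) f B1 B2) {s : S.Strand}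
    (hH : B2.strandHeight s = B1.strandHeight s + 1) :
    stepEvent (id : S.Strand → S.Strand) B1 B2 s
      = S.term (s, B1.strandHeight s + 1) := by
  unfold stepEvent
  have hex : ∃ p : (S.Strand ≃ S.Strand) × S.Strand,
      StepVia (id : S.Strand → S.Strand) p.1 B1 B2 ∧ id p.2 = s ∧
      B2.strandHeight (p.1 p.2) = B1.strandHeight p.2 + 1 := by
    refine ⟨⟨f, s⟩, hstep, rfl, ?_⟩
    simpa [stepVia_id_eq hstep s] using hH
  rw [dif_pos hex]
  obtain ⟨hs1, hs2, hs3⟩ := hex.choose_spec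
  have e1 : hex.choose.1 hex.choose.2 = hex.choose.2 := stepVia_id_eq hs1 _
  have e2 : hex.choose.2 = s := hs2
  rw [e1, e2] at hs3 ⊢
  rw [hs3]

lemma hist_spec (C : Chain (S := S) (id : S.Strand → S.Strand)) (m : ℕ) (s : S.Strand) :
    (C.hist s m).length = (C.B m).strandHeight s ∧
      ∀ i : ℕ, i < (C.hist s m).length → (C.hist s m)[i]? = S.term (s, i + 1) := by
  induction m with
  | zero =>
    constructor
    · show ([] : List (Bool × M)).length = _
      rw [C.init, strandHeight_empty]
      rfl
    · intro i hi; simp [Chain.hist] at hi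
  | succ m ih =>
    obtain ⟨f, hf⟩ := C.step m
    rcases stepVia_height_cases hf s with hH | hH
    · have hev := stepEvent_eq_none hf hH
      constructor
      · show (C.hist s m ++ _).length = _
        rw [hev, hH]
        simpa using ih.1
      · intro i hi
        show (C.hist s m ++ _)[i]? = _
        rw [hev]
        simp only [Option.toList_none, List.append_nil]
        apply ih.2
        have : (C.hist s (m+1)).length = (C.hist s m).length := by
          show (C.hist s m ++ _).length = _
          rw [hev]; simp
        omega
    · have hev := stepEvent_eq_some hf hH
      have hnode : (s, (C.B m).strandHeight s + 1) ∈ (C.B (m+1)).nodes := by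
        rw [← hH]; exact strandHeight_mem (by omega)
      have hvalid := (C.B (m+1)).nodes_valid _ hnode
      obtain ⟨e, he⟩ : ∃ e, S.term (s, (C.B m).strandHeight s + 1) = some e := by
        have hlen : (C.B m).strandHeight s < (S.tr s).length := hvalid.2
        exact ⟨(S.tr s)[(C.B m).strandHeight s],
          by simp [term, List.getElem?_eq_getElem hlen]⟩
      constructor
      · show (C.hist s m ++ _).length = _
        rw [hev, he, hH]
        simp [ih.1]
      · intro i hi
        have hlen : (C.hist s (m+1)).length = (C.hist s m).length + 1 := by
          show (C.hist s m ++ _).length = _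
          rw [hev, he]; simp
        show (C.hist s m ++ _)[i]? = _
        rw [hev, he]
        rw [hlen] at hi
        rcases Nat.lt_or_ge i (C.hist s m).length with hlt | hge
        · rw [List.getElem?_append_left hlt]
          exact ih.2 i hlt
        · have : i = (C.hist s m).length := by omega
          subst this
          simp only [Option.toList_some]
          rw [List.getElem?_concat_length]
          rw [ih.1, ← he]

end StrandPaper.StrandSpace
end Aux3

section Aux4
namespace StrandPaper.StrandSpace

variable {M : Type} {S : StrandSpace M}

lemma edge_mem {B : S.Bundle} {n1 n2 : S.Node} (h : B.edge n1 n2) :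
    n1 ∈ B.nodes ∧ n2 ∈ B.nodes := by
  rcases h with h | ⟨_, h1, h2⟩
  · exact ⟨(B.comm_mem _ _ h).1, (B.comm_mem _ _ h).2.1⟩
  · exact ⟨h1, h2⟩

lemma chain_heightLE (C : Chain (S := S) (id : S.Strand → S.Strand)) (m : ℕ) :
    (C.B m).HeightLE (2 * m + 1) := by
  classical
  set β : S.Node → ℕ := fun n => sInf {k | n ∈ (C.B k).nodes} with hβ
  -- basic facts about β
  have hβmem : ∀ n ∈ (C.B m).nodes, n ∈ (C.B (β n)).nodes := by
    intro n hn
    exact Nat.sInf_mem (⟨m, hn⟩ : {k | n ∈ (C.B k).nodes}.Nonempty)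
  have hβle : ∀ n ∈ (C.B m).nodes, β n ≤ m := fun n hn =>
    Nat.sInf_le (show m ∈ {k | n ∈ (C.B k).nodes} from hn)
  have hβpos : ∀ n ∈ (C.B m).nodes, 1 ≤ β n := by
    intro n hn
    by_contra h
    have h0 : β n = 0 := by omega
    have := hβmem n hn
    rw [h0, C.init] at this
    exact this
  -- comm edges: β nondecreasing
  have hcommβ : ∀ n1 n2, (C.B m).comm n1 n2 → β n1 ≤ β n2 := by
    intro n1 n2 hc
    obtain ⟨h1m, h2m, u, hu1, hu2⟩ := (C.B m).comm_mem n1 n2 hc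
    have h2k : n2 ∈ (C.B (β n2)).nodes := hβmem n2 h2m
    obtain ⟨n1', h1', huniq'⟩ := (C.B (β n2)).recv_unique n2 h2k u hu2
    have h1'm : (C.B m).comm n1' n2 := chain_comm_mono C (hβle n2 h2m) h1'
    obtain ⟨w, hw, huniq⟩ := (C.B m).recv_unique n2 h2m u hu2
    have e1 : n1' = w := huniq _ h1'm
    have e2 : n1 = w := huniq _ hc
    have h1k : (C.B (β n2)).comm n1 n2 := by rw [e2, ← e1]; exact h1'
    exact Nat.sInf_le ((C.B (β n2)).comm_mem _ _ h1k).1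
  -- succ edges: β strictly increasing
  have hsuccβ : ∀ n1 n2, S.SuccEdge n1 n2 → n1 ∈ (C.B m).nodes → n2 ∈ (C.B m).nodes →
      β n1 < β n2 := by
    intro n1 n2 hs h1m h2m
    obtain ⟨hs1, hs2, hn1, hn2⟩ := hs
    obtain ⟨k', hk'⟩ : ∃ k', β n2 = k' + 1 := ⟨β n2 - 1, by have := hβpos n2 h2m; omega⟩
    have h2k : n2 ∈ (C.B (k' + 1)).nodes := by rw [← hk']; exact hβmem n2 h2m
    have h2nk : n2 ∉ (C.B k').nodes := by
      intro hmem
      have : β n2 ≤ k' := Nat.sInf_le (show k' ∈ {k | n2 ∈ (C.B k).nodes} from hmem)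
      omega
    -- heights
    have hHk' : (C.B k').strandHeight n2.1 < n2.2 := by
      by_contra hle
      exact h2nk (by
        have : (n2.1, n2.2) ∈ (C.B k').nodes :=
          mem_of_le_strandHeight (by omega) (by omega)
        simpa using this)
    obtain ⟨f, hf⟩ := C.step k'
    have hHk1 : n2.2 ≤ (C.B (k' + 1)).strandHeight n2.1 := by
      have : (n2.1, n2.2) ∈ (C.B (k'+1)).nodes := by simpa using h2k
      exact le_strandHeight this
    rcases stepVia_height_cases hf n2.1 with hc | hc
    · omega
    · -- height went from n1.2 to n2.2 = n1.2 + 1; so n1 ∈ B k'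
      have hn1k : n1 ∈ (C.B k').nodes := by
        have : (n1.1, n1.2) ∈ (C.B k').nodes := by
          apply mem_of_le_strandHeight hn1.1
          rw [← hs1]; omega
        simpa using this
      have : β n1 ≤ k' := Nat.sInf_le (show k' ∈ {k | n1 ∈ (C.B k).nodes} from hn1k)
      omega
  -- the weight function
  set w : S.Node → ℕ := fun n =>
    2 * β n + (if ∃ u, S.term n = some (false, u) then 1 else 0) with hw
  have hwedge : ∀ n1 n2, (C.B m).edge n1 n2 → w n1 < w n2 := by
    intro n1 n2 he
    rcases he with hc | ⟨hs, h1m, h2m⟩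
    · obtain ⟨h1m, h2m, u, hu1, hu2⟩ := (C.B m).comm_mem n1 n2 hc
      have hb1 : ¬ ∃ u', S.term n1 = some (false, u') := by
        rintro ⟨u', hu'⟩
        rw [hu1] at hu'
        simp at hu'
      have hβ12 := hcommβ n1 n2 hc
      have hb2 : ∃ u', S.term n2 = some (false, u') := ⟨u, hu2⟩
      simp only [hw, if_neg hb1, if_pos hb2]
      omega
    · have hβ12 := hsuccβ n1 n2 hs h1m h2m
      simp only [hw]
      split <;> split <;> omega
  have hwbound : ∀ n ∈ (C.B m).nodes, w n < 2 * m + 2 := by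
    intro n hn
    have := hβle n hn
    simp only [hw]
    split <;> omega
  -- path counting
  intro l hl
  have hchain : l.Chain' (fun a b => w a < w b) := hl.1.imp hwedge
  have hmap : (l.map w).Chain' (· < ·) := (List.isChain_map w).mpr hchain
  have hpair : (l.map w).Pairwise (· < ·) := List.isChain_iff_pairwise.mp hmap
  have hnodup : (l.map w).Nodup := hpair.imp Nat.ne_of_lt
  have hsub : (l.map w).toFinset ⊆ Finset.range (2 * m + 2) := by
    intro x hx
    rw [List.mem_toFinset] at hx
    obtain ⟨n, hn, rfl⟩ := List.mem_map.mp hx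
    exact Finset.mem_range.mpr (hwbound n (hl.2 n hn))
  have := Finset.card_le_card hsub
  rw [List.toFinset_card_of_nodup hnodup, Finset.card_range, List.length_map] at this
  omega

end StrandPaper.StrandSpace
end Aux4

section Aux5
namespace StrandPaper.StrandSpace

variable {M : Type} {S : StrandSpace M}

lemma Bundle.ext' {B1 B2 : S.Bundle} (h1 : B1.nodes = B2.nodes)
    (h2 : B1.comm = B2.comm) : B1 = B2 := by
  cases B1; cases B2
  dsimp at h1 h2
  subst h1; subst h2
  rfl

/-- depth of a node: the sup of lengths of causal paths strictly before it. -/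
noncomputable def depth (B : S.Bundle) (n : S.Node) : ℕ :=
  sSup {j | ∃ l, B.CausalPath (l ++ [n]) ∧ l.length = j}

lemma depth_bddAbove {B : S.Bundle} {k : ℕ} (hk : B.HeightLE k) (n : S.Node) :
    BddAbove {j | ∃ l, B.CausalPath (l ++ [n]) ∧ l.length = j} := by
  refine ⟨k, ?_⟩
  rintro j ⟨l, hl, rfl⟩
  have := hk _ hl
  simp at this
  omega

lemma depth_nonempty {B : S.Bundle} {n : S.Node} (hn : n ∈ B.nodes) :
    {j | ∃ l, B.CausalPath (l ++ [n]) ∧ l.length = j}.Nonempty := by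
  refine ⟨0, [], ⟨?_, ?_⟩, rfl⟩
  · exact List.isChain_singleton n
  · intro x hx
    simp at hx
    rwa [hx]

lemma depth_le {B : S.Bundle} {k : ℕ} (hk : B.HeightLE k) (n : S.Node)
    (hn : n ∈ B.nodes) : depth B n ≤ k := by
  apply csSup_le (depth_nonempty hn)
  rintro j ⟨l, hl, rfl⟩
  have := hk _ hl
  simp at this
  omega

lemma depth_lt_of_edge {B : S.Bundle} {k : ℕ} (hk : B.HeightLE k) {n1 n2 : S.Node}
    (he : B.edge n1 n2) : depth B n1 < depth B n2 := by
  obtain ⟨h1, h2⟩ := edge_mem he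
  obtain ⟨l, hl, hlen⟩ :=
    Nat.sSup_mem (depth_nonempty h1) (depth_bddAbove hk n1)
  have hlen' : l.length = depth B n1 := hlen
  have hpath : B.CausalPath ((l ++ [n1]) ++ [n2]) := by
    constructor
    · refine List.IsChain.append hl.1 (List.isChain_singleton n2) ?_
      intro x hx y hy
      simp [List.getLast?_concat] at hx
      simp at hy
      rw [← hx, ← hy]
      exact he
    · intro x hx
      rcases List.mem_append.mp hx with hx' | hx'
      · exact hl.2 x hx'
      · simp at hx'; rwa [hx']
  have hle : l.length + 1 ≤ depth B n2 := by
    apply le_csSup (depth_bddAbove hk n2)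
    exact ⟨l ++ [n1], hpath, by simp⟩
  omega

/-- The bundle restricted to nodes of depth `< j`. -/
noncomputable def restrict (B : S.Bundle) {k : ℕ} (hk : B.HeightLE k) (j : ℕ) :
    S.Bundle where
  nodes := {n | n ∈ B.nodes ∧ depth B n < j}
  comm n1 n2 := B.comm n1 n2 ∧ depth B n1 < j ∧ depth B n2 < j
  nodes_valid := fun n hn => B.nodes_valid n hn.1
  comm_mem := by
    rintro n1 n2 ⟨hc, hd1, hd2⟩
    obtain ⟨h1, h2, h3⟩ := B.comm_mem n1 n2 hc
    exact ⟨⟨h1, hd1⟩, ⟨h2, hd2⟩, h3⟩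
  recv_unique := by
    rintro n2 ⟨h2, hd2⟩ u hu
    obtain ⟨n1, h1, huniq⟩ := B.recv_unique n2 h2 u hu
    refine ⟨n1, ⟨h1, ?_, hd2⟩, ?_⟩
    · exact lt_trans (depth_lt_of_edge hk (Or.inl h1)) hd2
    · rintro y ⟨hy, -, -⟩
      exact huniq y hy
  succ_closed := by
    rintro n1 n2 hs ⟨h2, hd2⟩
    have h1 : n1 ∈ B.nodes := B.succ_closed n1 n2 hs h2
    refine ⟨h1, lt_trans (depth_lt_of_edge hk (Or.inr ⟨hs, h1, h2⟩)) hd2⟩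
  acyclic := by
    intro n hcyc
    apply B.acyclic n
    refine Relation.TransGen.mono ?_ n n hcyc
    rintro a b (⟨hc, -, -⟩ | ⟨hs, ⟨ha, -⟩, hb, -⟩)
    · exact Or.inl hc
    · exact Or.inr ⟨hs, ha, hb⟩

lemma restrict_zero {B : S.Bundle} {k : ℕ} (hk : B.HeightLE k) :
    restrict B hk 0 = emptyBundle S := by
  apply Bundle.ext'
  · ext n
    simp [restrict, emptyBundle]
  · funext n1 n2
    simp only [restrict, emptyBundle, eq_iff_iff]
    constructor
    · rintro ⟨-, h, -⟩; omega
    · rintro ⟨⟩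

lemma restrict_eq_self {B : S.Bundle} {k : ℕ} (hk : B.HeightLE k) :
    restrict B hk (k + 1) = B := by
  apply Bundle.ext'
  · ext n
    simp only [restrict, Set.mem_setOf_eq]
    exact ⟨fun h => h.1, fun h => ⟨h, by have := depth_le hk n h; omega⟩⟩
  · funext n1 n2
    simp only [restrict, eq_iff_iff]
    constructor
    · rintro ⟨h, -, -⟩; exact h
    · intro h
      obtain ⟨h1, h2, -⟩ := B.comm_mem n1 n2 h
      exact ⟨h, by have := depth_le hk n1 h1; omega,
        by have := depth_le hk n2 h2; omega⟩

lemma restrict_height_le_succ {B : S.Bundle} {k : ℕ} (hk : B.HeightLE k)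
    (j : ℕ) (s : S.Strand) :
    (restrict B hk (j + 1)).strandHeight s ≤ (restrict B hk j).strandHeight s + 1 := by
  by_contra hcon
  push_neg at hcon
  set h' := (restrict B hk (j + 1)).strandHeight s with hh'
  set H := (restrict B hk j).strandHeight s with hH
  have hm' : (s, h') ∈ (restrict B hk (j + 1)).nodes := strandHeight_mem (by omega)
  have hm'' : (s, h' - 1) ∈ (restrict B hk (j + 1)).nodes :=
    mem_of_le_strandHeight (by omega) (by omega)
  have hnot1 : (s, h') ∉ (restrict B hk j).nodes := by
    intro hmem
    have := le_strandHeight hmem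
    omega
  have hnot2 : (s, h' - 1) ∉ (restrict B hk j).nodes := by
    intro hmem
    have := le_strandHeight hmem
    omega
  have hd1 : depth B (s, h') = j := by
    have h1 := hm'.2
    have : ¬ depth B (s, h') < j := fun hd => hnot1 ⟨hm'.1, hd⟩
    omega
  have hd2 : depth B (s, h' - 1) = j := by
    have h1 := hm''.2
    have : ¬ depth B (s, h' - 1) < j := fun hd => hnot2 ⟨hm''.1, hd⟩
    omega
  have hedge : B.edge (s, h' - 1) (s, h') := by
    refine Or.inr ⟨⟨rfl, by simp; omega, ?_, ?_⟩, hm''.1, hm'.1⟩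
    · exact B.nodes_valid _ hm''.1
    · exact B.nodes_valid _ hm'.1
  have := depth_lt_of_edge hk hedge
  omega

lemma restrict_step {B : S.Bundle} {k : ℕ} (hk : B.HeightLE k) (j : ℕ) :
    Step (id : S.Strand → S.Strand) (restrict B hk j) (restrict B hk (j + 1)) := by
  refine ⟨Equiv.refl _, fun s => rfl, ⟨?_, ?_⟩, ?_⟩
  · intro s i hm
    refine ⟨⟨hm.1, ?_⟩, by simp⟩
    have := hm.2
    simp only [Equiv.refl_apply]
    omega
  · rintro s i s' j' ⟨hc, hd1, hd2⟩
    simp only [Equiv.refl_apply]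
    exact ⟨hc, by omega, by omega⟩
  · intro s s' hss h1 h2
    have hss' : s = s' := hss
    subst hss'
    have h1' : (restrict B hk (j + 1)).strandHeight s ≠
        (restrict B hk j).strandHeight s := by
      simpa using h1
    have hmono : (restrict B hk j).strandHeight s ≤
        (restrict B hk (j + 1)).strandHeight s :=
      strandHeight_mono (fun i hm => ⟨hm.1, by have := hm.2; omega⟩)
    have hle := restrict_height_le_succ hk j s
    refine ⟨rfl, ?_⟩
    simp only [Equiv.refl_apply]
    omega

end StrandPaper.StrandSpace
end Aux5


open StrandPaper StrandPaper.StrandSpace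

/-- A global state `σ` (one history per strand-as-agent) is message-equivalent to a
bundle `B`: each strand's history has length equal to the strand's height in `B`, and
its `i`-th event corresponds to the signed term of the `(i+1)`-st node of the strand. -/
def MsgEquiv {M : Type} {S : StrandSpace M} (σ : S.Strand → List (Bool × M))
    (B : S.Bundle) : Prop :=
  ∀ s : S.Strand, (σ s).length = B.strandHeight s ∧
    ∀ i : ℕ, i < (σ s).length → (σ s)[i]? = S.term (s, i + 1)

/-- Every global state arising in `R(Σ, Σ, id)` is message-equivalent to a
bundle of `Σ` of finite height, and conversely every finite-height bundle of `Σ` is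
message-equivalent to some global state of `R(Σ, Σ, id)`. -/
theorem global_states_are_bundles {M : Type} (S : StrandSpace M) :
    (∀ (C : Chain (S := S) (id : S.Strand → S.Strand)) (m : ℕ),
        ∃ B : S.Bundle, B.FiniteHeight ∧ MsgEquiv (fun s => C.hist s m) B) ∧
    (∀ B : S.Bundle, B.FiniteHeight →
        ∃ (C : Chain (S := S) (id : S.Strand → S.Strand)) (m : ℕ),
          MsgEquiv (fun s => C.hist s m) B) := by
  constructor
  · intro C m
    exact ⟨C.B m, ⟨2 * m + 1, chain_heightLE C m⟩, fun s => hist_spec C m s⟩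
  · rintro B ⟨k, hk⟩
    refine ⟨⟨fun j => restrict B hk j, restrict_zero hk, fun j => restrict_step hk j⟩,
      k + 1, fun s => ?_⟩
    have h := hist_spec
      (⟨fun j => restrict B hk j, restrict_zero hk, fun j => restrict_step hk j⟩ :
        Chain (S := S) (id : S.Strand → S.Strand)) (k + 1) s
    have hB : restrict B hk (k + 1) = B := restrict_eq_self hk
    rw [show ((⟨fun j => restrict B hk j, restrict_zero hk, fun j => restrict_step hk j⟩ :
        Chain (S := S) (id : S.Strand → S.Strand)).B (k + 1)) = B from hB] at h
    exact h
end
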